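/- Let (μ_i)_{i∈I} be a family of measures in 𝐌 with means m_i and Lorenz functions L_i. Then: (1) if sup_{i∈I} m_i < ∞ and the pointwise liminf function x ↦ liminf_{i} L_i(x) (liminf taken along the cofinite filter on I) tends to 1 as x → 1⁻, then the family (μ_i)_{i∈I} is uniformly integrable; (2) if (μ_i)_{i∈I} is uniformly integrable and inf_{i∈I} m_i > 0, then the pointwise infimum function x ↦ inf_{i∈I} L_i(x) tends to 1 as x → 1⁻. -/

import Mathlib

open MeasureTheory Filter Topology

noncomputable section

/-- The mean of a measure on `ℝ`. -/
def mMean (μ : Measure ℝ) : ℝ := ∫ x, x ∂μ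

/-- `μ ∈ 𝐌`: a Borel probability measure on `ℝ₊` (modelled as a measure on `ℝ` giving no
mass to negative numbers) with finite nonzero mean. -/
def MemM (μ : Measure ℝ) : Prop :=
  IsProbabilityMeasure μ ∧ μ {x | x < 0} = 0 ∧ Integrable id μ ∧ 0 < mMean μ

/-- The cumulative distribution function `F_μ(x) = μ([0,x])`. -/
def cdfR (μ : Measure ℝ) (x : ℝ) : ℝ := (μ (Set.Icc 0 x)).toReal

/-- The quantile function `Q_μ(p) = inf {x ∈ ℝ₊ : F_μ(x) ≥ p}`. -/
def quant (μ : Measure ℝ) (p : ℝ) : ℝ := sInf {x : ℝ | 0 ≤ x ∧ p ≤ cdfR μ x}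

/-- The Lorenz function `L_μ(p) = (∫_0^p Q_μ(t) dt) / m_μ`. -/
def lorenz (μ : Measure ℝ) (p : ℝ) : ℝ := (∫ t in (0:ℝ)..p, quant μ t) / mMean μ

/-- The pseudo-Lorenz function `Λ_μ(p) = (∫_{[0,Q_μ(p)]} u dμ(u)) / m_μ` for `p ∈ [0,1)`,
with `Λ_μ(1) = 1`. -/
def pseudoLorenz (μ : Measure ℝ) (p : ℝ) : ℝ :=
  if p = 1 then 1 else (∫ u in Set.Icc (0:ℝ) (quant μ p), u ∂μ) / mMean μ

/-- The Gini coefficient `G(μ) = (∫∫ |x-y| d(μ⊗μ)) / (2 m_μ)`. -/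
def gini (μ : Measure ℝ) : ℝ := (∫ z : ℝ × ℝ, |z.1 - z.2| ∂(μ.prod μ)) / (2 * mMean μ)

/-- The Hoover coefficient `H(μ) = (∫ |x - m_μ| dμ) / (2 m_μ)`. -/
def hoover (μ : Measure ℝ) : ℝ := (∫ x, |x - mMean μ| ∂μ) / (2 * mMean μ)

/-- The Wasserstein-1 distance `W₁(μ,ν) = ∫_0^1 |Q_μ - Q_ν|`. -/
def W1 (μ ν : Measure ℝ) : ℝ := ∫ t in (0:ℝ)..1, |quant μ t - quant ν t|

/-- Weak convergence of a sequence of measures: convergence of integrals of all bounded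
continuous functions. -/
def WeakCv (μs : ℕ → Measure ℝ) (ν : Measure ℝ) : Prop :=
  ∀ f : ℝ → ℝ, Continuous f → (∃ C : ℝ, ∀ x, |f x| ≤ C) →
    Tendsto (fun n => ∫ x, f x ∂(μs n)) atTop (𝓝 (∫ x, f x ∂ν))

/-- Uniform integrability of a family of measures on `ℝ₊`:
`sup_i ∫_{(α,∞)} x dμ_i(x) → 0` as `α → +∞`. -/
def UnifInt {ι : Type*} (μs : ι → Measure ℝ) : Prop :=
  ∀ ε > (0:ℝ), ∃ A : ℝ, ∀ α ≥ A, ∀ i, (∫ x in Set.Ioi α, x ∂(μs i)) ≤ ε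

end


open Set ENNReal

section aux
variable {μ : Measure ℝ}

lemma id_nonneg_ae (hμ : MemM μ) : ∀ᵐ x ∂μ, 0 ≤ (x:ℝ) := by
  rw [ae_iff]
  convert hμ.2.1 using 2
  ext x; simp

lemma cdfR_mono (hμ : MemM μ) : Monotone (cdfR μ) := by
  haveI := hμ.1
  intro a b hab
  exact ENNReal.toReal_mono (measure_ne_top μ _) (measure_mono (Set.Icc_subset_Icc_right hab))

lemma cdfR_le_one (hμ : MemM μ) (x : ℝ) : cdfR μ x ≤ 1 := by
  haveI := hμ.1
  have : μ (Set.Icc 0 x) ≤ 1 := prob_le_one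
  calc (μ (Set.Icc 0 x)).toReal ≤ (1:ℝ≥0∞).toReal := ENNReal.toReal_mono ENNReal.one_ne_top this
  _ = 1 := by simp

lemma memM_measure_Ici (hμ : MemM μ) : μ (Set.Ici (0:ℝ)) = 1 := by
  haveI := hμ.1
  have : μ (Set.Iio (0:ℝ)) = 0 := by
    exact hμ.2.1
  have h := prob_compl_eq_one_sub (μ := μ) (measurableSet_Iio (a := (0:ℝ)))
  rw [this, Set.compl_Iio] at h
  simp at h
  exact h

lemma exists_cdfR_ge (hμ : MemM μ) {t : ℝ} (ht : t < 1) : ∃ a : ℝ, 0 ≤ a ∧ t ≤ cdfR μ a := by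
  haveI := hμ.1
  have hmono : Monotone (fun n : ℕ => Set.Icc (0:ℝ) n) := fun n m hnm =>
    Set.Icc_subset_Icc_right (by exact_mod_cast hnm)
  have hU : (⋃ n : ℕ, Set.Icc (0:ℝ) n) = Set.Ici 0 := by
    ext x; simp only [Set.mem_iUnion, Set.mem_Icc, Set.mem_Ici]
    constructor
    · rintro ⟨n, hn, -⟩; exact hn
    · intro hx; obtain ⟨n, hn⟩ := exists_nat_ge x; exact ⟨n, hx, hn⟩
  have := tendsto_measure_iUnion_atTop (μ := μ) hmono
  rw [hU, memM_measure_Ici hμ] at this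
  have h2 : Filter.Tendsto (fun n : ℕ => cdfR μ n) Filter.atTop (𝓝 1) := by
    have := (ENNReal.tendsto_toReal ENNReal.one_ne_top).comp this
    simpa [cdfR, Function.comp_def] using this
  have := h2.eventually_const_le ht
  obtain ⟨n, hn⟩ := this.exists
  exact ⟨n, Nat.cast_nonneg n, hn⟩

lemma quant_nonneg (μ : Measure ℝ) (p : ℝ) : 0 ≤ quant μ p :=
  Real.sInf_nonneg (fun x hx => hx.1)

lemma quantSet_bddBelow (μ : Measure ℝ) (p : ℝ) :
    BddBelow {x : ℝ | 0 ≤ x ∧ p ≤ cdfR μ x} := ⟨0, fun x hx => hx.1⟩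

lemma quantSet_nonempty (hμ : MemM μ) {t : ℝ} (ht : t < 1) :
    Set.Nonempty {x : ℝ | 0 ≤ x ∧ t ≤ cdfR μ x} := by
  obtain ⟨a, ha, hta⟩ := exists_cdfR_ge hμ ht
  exact ⟨a, ha, hta⟩

lemma cdfR_right_cont (hμ : MemM μ) {q : ℝ} (hq : 0 ≤ q) :
    Tendsto (fun n : ℕ => cdfR μ (q + 1/(n+1))) atTop (𝓝 (cdfR μ q)) := by
  haveI := hμ.1
  have hanti : Antitone (fun n : ℕ => Set.Icc (0:ℝ) (q + 1/(n+1))) := by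
    intro n m hnm
    apply Set.Icc_subset_Icc_right
    have : (1:ℝ)/(m+1) ≤ 1/(n+1) := by
      apply one_div_le_one_div_of_le <;> [positivity; exact_mod_cast by omega]
    linarith
  have hI : (⋂ n : ℕ, Set.Icc (0:ℝ) (q + 1/(n+1))) = Set.Icc 0 q := by
    ext x
    simp only [Set.mem_iInter, Set.mem_Icc]
    constructor
    · intro h
      refine ⟨(h 0).1, ?_⟩
      by_contra hx
      push_neg at hx
      obtain ⟨n, hn⟩ := exists_nat_one_div_lt (by linarith : (0:ℝ) < x - q)
      have := (h n).2
      linarith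
    · intro h n
      have : (0:ℝ) < 1/(n+1) := by positivity
      exact ⟨h.1, by linarith [h.2]⟩
  have := tendsto_measure_iInter_atTop (μ := μ)
    (fun n => (measurableSet_Icc).nullMeasurableSet) hanti ⟨0, measure_ne_top μ _⟩
  rw [hI] at this
  exact (ENNReal.tendsto_toReal (measure_ne_top μ _)).comp this

lemma le_cdfR_quant (hμ : MemM μ) {t : ℝ} (ht : t < 1) : t ≤ cdfR μ (quant μ t) := by
  have hne := quantSet_nonempty hμ ht
  have hbdd := quantSet_bddBelow μ t
  set q := quant μ t with hqdef
  have hq0 : 0 ≤ q := quant_nonneg μ t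
  have key : ∀ n : ℕ, t ≤ cdfR μ (q + 1/(n+1)) := by
    intro n
    have hlt : q < q + 1/(n+1) := by
      have : (0:ℝ) < 1/(n+1) := by positivity
      linarith
    obtain ⟨x, hx, hxlt⟩ := exists_lt_of_csInf_lt hne (by exact hlt)
    exact hx.2.trans (cdfR_mono hμ hxlt.le)
  exact ge_of_tendsto (cdfR_right_cont hμ hq0) (Filter.Eventually.of_forall key)

lemma quant_le_iff (hμ : MemM μ) {t a : ℝ} (ht : t < 1) (ha : 0 ≤ a) :
    quant μ t ≤ a ↔ t ≤ cdfR μ a := by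
  constructor
  · intro h
    exact (le_cdfR_quant hμ ht).trans (cdfR_mono hμ h)
  · intro h
    exact csInf_le (quantSet_bddBelow μ t) ⟨ha, h⟩

lemma quant_mono (hμ : MemM μ) {t s : ℝ} (hs : s < 1) (hts : t ≤ s) :
    quant μ t ≤ quant μ s := by
  apply csInf_le_csInf (quantSet_bddBelow μ t) (quantSet_nonempty hμ hs)
  intro x hx
  exact ⟨hx.1, hts.trans hx.2⟩

lemma quant_aemeasurable (hμ : MemM μ) :
    AEMeasurable (quant μ) (volume.restrict (Set.Ioo (0:ℝ) 1)) := by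
  apply aemeasurable_restrict_of_monotoneOn measurableSet_Ioo
  intro t ht s hs hts
  exact quant_mono hμ hs.2 hts

lemma map_quant (hμ : MemM μ) :
    (volume.restrict (Set.Ioo (0:ℝ) 1)).map (quant μ) = μ := by
  haveI := hμ.1
  haveI : IsProbabilityMeasure (volume.restrict (Set.Ioo (0:ℝ) 1)) := by
    constructor; simp
  haveI : IsProbabilityMeasure ((volume.restrict (Set.Ioo (0:ℝ) 1)).map (quant μ)) :=
    Measure.isProbabilityMeasure_map (quant_aemeasurable hμ)
  apply Measure.ext_of_Iic
  intro a
  rw [Measure.map_apply_of_aemeasurable (quant_aemeasurable hμ) measurableSet_Iic]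
  rcases le_or_gt 0 a with ha | ha
  · have hset : quant μ ⁻¹' Set.Iic a ∩ Set.Ioo 0 1 = Set.Iic (cdfR μ a) ∩ Set.Ioo 0 1 := by
      ext t
      simp only [Set.mem_inter_iff, Set.mem_preimage, Set.mem_Iic, Set.mem_Ioo]
      constructor
      · rintro ⟨h1, h2⟩
        exact ⟨(quant_le_iff hμ h2.2 ha).mp h1, h2⟩
      · rintro ⟨h1, h2⟩
        exact ⟨(quant_le_iff hμ h2.2 ha).mpr h1, h2⟩
    rw [Measure.restrict_apply₀ ((quant_aemeasurable hμ).nullMeasurable measurableSet_Iic),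
      hset, ← Measure.restrict_apply measurableSet_Iic]
    have hc0 : 0 ≤ cdfR μ a := ENNReal.toReal_nonneg
    have hc1 : cdfR μ a ≤ 1 := cdfR_le_one hμ a
    rw [Measure.restrict_apply measurableSet_Iic]
    have hIic : μ (Set.Iic a) = ENNReal.ofReal (cdfR μ a) := by
      have hae : Set.Iic a =ᵐ[μ] Set.Icc 0 a := by
        apply Filter.eventuallyEq_of_mem (s := {x : ℝ | 0 ≤ x})
        · rw [mem_ae_iff]
          apply measure_mono_null _ hμ.2.1
          intro x hx
          simpa using hx
        · intro x hx
          simp only [Set.mem_Iic, Set.mem_Icc, eq_iff_iff]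
          exact ⟨fun h => ⟨hx, h⟩, fun h => h.2⟩
      rw [measure_congr hae, cdfR, ENNReal.ofReal_toReal (measure_ne_top μ _)]
    rw [hIic]
    rcases lt_or_eq_of_le hc1 with hlt | heq
    · have : Set.Iic (cdfR μ a) ∩ Set.Ioo (0:ℝ) 1 = Set.Ioc 0 (cdfR μ a) := by
        ext t
        simp only [Set.mem_inter_iff, Set.mem_Iic, Set.mem_Ioo, Set.mem_Ioc]
        constructor
        · rintro ⟨h1, h2, h3⟩; exact ⟨h2, h1⟩
        · rintro ⟨h1, h2⟩; exact ⟨h2, h1, lt_of_le_of_lt h2 hlt⟩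
      rw [this, Real.volume_Ioc, sub_zero]
    · have : Set.Iic (cdfR μ a) ∩ Set.Ioo (0:ℝ) 1 = Set.Ioo 0 1 := by
        rw [Set.inter_eq_right]
        intro t ht
        rw [← heq] at ht
        exact le_of_lt ht.2
      rw [this, Real.volume_Ioo, sub_zero, ← heq]
  · rw [Measure.restrict_apply₀ ((quant_aemeasurable hμ).nullMeasurable measurableSet_Iic)]
    have h1 : quant μ ⁻¹' Set.Iic a ∩ Set.Ioo 0 1 = (∅ : Set ℝ) := by
      ext t
      simp only [Set.mem_inter_iff, Set.mem_preimage, Set.mem_Iic, Set.mem_empty_iff_false,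
        iff_false, not_and]
      intro hq
      exact absurd (lt_of_le_of_lt (hq.trans ha.le) (by norm_num : (0:ℝ) < 1)) (by
        have := quant_nonneg μ t
        intro
        linarith [hq.trans ha.le])
    rw [h1]
    have h2 : μ (Set.Iic a) = 0 := by
      apply measure_mono_null _ hμ.2.1
      intro x hx
      simp only [Set.mem_Iic] at hx
      exact lt_of_le_of_lt hx ha
    simp [h2]
lemma integrableOn_quant (hμ : MemM μ) : IntegrableOn (quant μ) (Set.Ioo (0:ℝ) 1) volume := by
  have h := hμ.2.2.1
  rw [← map_quant hμ] at h
  rw [IntegrableOn]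
  have := (integrable_map_measure (measurable_id.aestronglyMeasurable) (quant_aemeasurable hμ)).mp h
  simpa [Function.comp] using this

lemma integral_quant_Ioo (hμ : MemM μ) :
    ∫ t in Set.Ioo (0:ℝ) 1, quant μ t = mMean μ := by
  have : mMean μ = ∫ x, id x ∂((volume.restrict (Set.Ioo (0:ℝ) 1)).map (quant μ)) := by
    rw [map_quant hμ]; rfl
  rw [this, integral_map (quant_aemeasurable hμ) measurable_id.aestronglyMeasurable]
  rfl

lemma cdfR_nonneg (μ : Measure ℝ) (x : ℝ) : 0 ≤ cdfR μ x := ENNReal.toReal_nonneg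

lemma tail_eq (hμ : MemM μ) {α : ℝ} (hα : 0 ≤ α) :
    ∫ x in Set.Ioi α, x ∂μ = ∫ t in Set.Ioo (cdfR μ α) 1, quant μ t := by
  set c := cdfR μ α with hc
  have hc0 : 0 ≤ c := cdfR_nonneg μ α
  have h1 : ∫ x in Set.Ioi α, id x ∂((volume.restrict (Set.Ioo (0:ℝ) 1)).map (quant μ))
      = ∫ t in quant μ ⁻¹' Set.Ioi α, quant μ t ∂(volume.restrict (Set.Ioo (0:ℝ) 1)) := by
    rw [setIntegral_map measurableSet_Ioi measurable_id.aestronglyMeasurable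
      (quant_aemeasurable hμ)]
    rfl
  rw [map_quant hμ] at h1
  rw [show (∫ x in Set.Ioi α, x ∂μ) = ∫ x in Set.Ioi α, id x ∂μ from rfl, h1]
  have hae : quant μ ⁻¹' Set.Ioi α =ᵐ[volume.restrict (Set.Ioo (0:ℝ) 1)] Set.Ioi c := by
    rw [Filter.eventuallyEq_set]
    filter_upwards [ae_restrict_mem measurableSet_Ioo] with t ht
    simp only [Set.mem_preimage, Set.mem_Ioi]
    rw [← not_le, ← not_le, not_iff_not]
    exact quant_le_iff hμ ht.2 hα
  have hset : Set.Ioi c ∩ Set.Ioo (0:ℝ) 1 = Set.Ioo c 1 := by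
    ext t
    simp only [Set.mem_inter_iff, Set.mem_Ioi, Set.mem_Ioo]
    constructor
    · rintro ⟨h1, h2, h3⟩; exact ⟨h1, h3⟩
    · rintro ⟨h1, h2⟩; exact ⟨h1, lt_of_le_of_lt hc0 h1, h2⟩
  rw [Measure.restrict_congr_set hae, Measure.restrict_restrict measurableSet_Ioi, hset]

lemma lorenz_Ioo (hμ : MemM μ) {x : ℝ} (hx : 0 ≤ x) :
    lorenz μ x = (∫ t in Set.Ioo (0:ℝ) x, quant μ t) / mMean μ := by
  rw [lorenz, intervalIntegral.integral_of_le hx, integral_Ioc_eq_integral_Ioo]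

lemma split_integral (hμ : MemM μ) {x : ℝ} (hx : 0 ≤ x) (hx1 : x ≤ 1) :
    ∫ t in Set.Ioo x 1, quant μ t = mMean μ * (1 - lorenz μ x) := by
  have hI : IntegrableOn (quant μ) (Set.Ioo (0:ℝ) 1) volume := integrableOn_quant hμ
  have hI1 : IntegrableOn (quant μ) (Set.Ioo (0:ℝ) x) volume :=
    hI.mono_set (Set.Ioo_subset_Ioo_right hx1)
  have hI2 : IntegrableOn (quant μ) (Set.Ioo x 1) volume :=
    hI.mono_set (Set.Ioo_subset_Ioo_left hx)
  have hI1' : IntegrableOn (quant μ) (Set.Ioc (0:ℝ) x) volume := by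
    rwa [integrableOn_Ioc_iff_integrableOn_Ioo]
  have hI2' : IntegrableOn (quant μ) (Set.Ioc x 1) volume := by
    rwa [integrableOn_Ioc_iff_integrableOn_Ioo]
  have hsplit : (∫ t in Set.Ioc (0:ℝ) x, quant μ t) + ∫ t in Set.Ioc x 1, quant μ t
      = ∫ t in Set.Ioc (0:ℝ) 1, quant μ t := by
    rw [← setIntegral_union (Set.Ioc_disjoint_Ioc_of_le le_rfl) measurableSet_Ioc hI1' hI2',
      Set.Ioc_union_Ioc_eq_Ioc hx hx1]
  rw [integral_Ioc_eq_integral_Ioo, integral_Ioc_eq_integral_Ioo,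
    integral_Ioc_eq_integral_Ioo] at hsplit
  rw [integral_quant_Ioo hμ] at hsplit
  have hm : mMean μ ≠ 0 := ne_of_gt hμ.2.2.2
  rw [lorenz_Ioo hμ hx]
  field_simp
  linarith
lemma quant_nonneg_ae (μ : Measure ℝ) {ν : Measure ℝ} : 0 ≤ᵐ[ν] quant μ :=
  Filter.Eventually.of_forall (fun t => quant_nonneg μ t)

lemma tail_nonneg (hμ : MemM μ) (α : ℝ) : 0 ≤ ∫ x in Set.Ioi α, x ∂μ :=
  setIntegral_nonneg_of_ae_restrict (ae_restrict_of_ae (id_nonneg_ae hμ))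

lemma tail_le_mean (hμ : MemM μ) (α : ℝ) : ∫ x in Set.Ioi α, x ∂μ ≤ mMean μ :=
  setIntegral_le_integral hμ.2.2.1 (id_nonneg_ae hμ)

lemma tail_antitone (hμ : MemM μ) {α β : ℝ} (hab : α ≤ β) :
    ∫ x in Set.Ioi β, x ∂μ ≤ ∫ x in Set.Ioi α, x ∂μ :=
  setIntegral_mono_set hμ.2.2.1.integrableOn (ae_restrict_of_ae (id_nonneg_ae hμ))
    (HasSubset.Subset.eventuallyLE (Set.Ioi_subset_Ioi hab))

lemma tail_small (hμ : MemM μ) {ε : ℝ} (hε : 0 < ε) :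
    ∃ A : ℝ, ∀ α ≥ A, ∫ x in Set.Ioi α, x ∂μ ≤ ε := by
  haveI := hμ.1
  have hU : (⋃ n : ℕ, Set.Iic (n:ℝ)) = Set.univ := by
    ext x; simp only [Set.mem_iUnion, Set.mem_Iic, Set.mem_univ, iff_true]
    obtain ⟨n, hn⟩ := exists_nat_ge x; exact ⟨n, hn⟩
  have hmono : Monotone (fun n : ℕ => Set.Iic (n:ℝ)) := fun n m hnm =>
    Set.Iic_subset_Iic.mpr (by exact_mod_cast hnm)
  have htend := tendsto_setIntegral_of_monotone (μ := μ) (f := fun x : ℝ => x)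
    (fun n : ℕ => measurableSet_Iic) hmono
    (by rw [hU]; exact integrableOn_univ.mpr hμ.2.2.1)
  rw [hU, setIntegral_univ] at htend
  have hev := htend.eventually_const_lt (by linarith : mMean μ - ε < mMean μ)
  obtain ⟨N, hN⟩ := hev.exists
  refine ⟨N, fun α hα => ?_⟩
  have h1 : ∫ x in Set.Ioi α, x ∂μ ≤ ∫ x in Set.Ioi (N:ℝ), x ∂μ := tail_antitone hμ hα
  have h2 : (∫ x in Set.Iic (N:ℝ), x ∂μ) + ∫ x in Set.Ioi (N:ℝ), x ∂μ = mMean μ := by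
    have := integral_add_compl (measurableSet_Iic (a := (N:ℝ))) hμ.2.2.1
    rwa [Set.compl_Iic] at this
  linarith

lemma markov (hμ : MemM μ) {α : ℝ} (hα : 0 < α) : 1 - mMean μ / α ≤ cdfR μ α := by
  haveI := hμ.1
  have hT : α * (μ (Set.Ioi α)).toReal ≤ mMean μ := by
    have h1 : α * (μ (Set.Ioi α)).toReal ≤ ∫ x in Set.Ioi α, x ∂μ := by
      have := setIntegral_ge_of_const_le_real (μ := μ) (c := α) measurableSet_Ioi
        (measure_ne_top μ _) (fun x hx => le_of_lt hx) hμ.2.2.1.integrableOn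
      exact this
    exact h1.trans (tail_le_mean hμ α)
  have hsum : 1 ≤ cdfR μ α + (μ (Set.Ioi α)).toReal := by
    have hsub : Set.Ici (0:ℝ) ⊆ Set.Icc 0 α ∪ Set.Ioi α := by
      intro x hx
      rcases le_or_gt x α with h | h
      · exact Or.inl ⟨hx, h⟩
      · exact Or.inr h
    have h1 : μ (Set.Ici (0:ℝ)) = 1 := memM_measure_Ici hμ
    have h2 : μ (Set.Ici (0:ℝ)) ≤ μ (Set.Icc 0 α) + μ (Set.Ioi α) :=
      le_trans (measure_mono hsub) (measure_union_le _ _)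
    rw [h1] at h2
    have h3 : ((1:ℝ≥0∞)).toReal ≤ (μ (Set.Icc 0 α) + μ (Set.Ioi α)).toReal :=
      ENNReal.toReal_mono (by finiteness) h2
    rwa [ENNReal.toReal_add (measure_ne_top μ _) (measure_ne_top μ _), ENNReal.toReal_one] at h3
  have hdiv : (μ (Set.Ioi α)).toReal ≤ mMean μ / α := by
    rw [le_div_iff₀ hα]; linarith [hT]
  linarith

lemma tail_le_of_cdfR_ge (hμ : MemM μ) {x α : ℝ} (hx0 : 0 ≤ x) (hx1 : x ≤ 1) (hα : 0 ≤ α)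
    (hcx : x ≤ cdfR μ α) : ∫ x in Set.Ioi α, x ∂μ ≤ mMean μ * (1 - lorenz μ x) := by
  rw [tail_eq hμ hα, ← split_integral hμ hx0 hx1]
  exact setIntegral_mono_set (integrableOn_quant hμ |>.mono_set (Set.Ioo_subset_Ioo_left hx0))
    (quant_nonneg_ae μ) (HasSubset.Subset.eventuallyLE (Set.Ioo_subset_Ioo_left hcx))

lemma lorenz_nonneg (hμ : MemM μ) {x : ℝ} (hx : 0 ≤ x) : 0 ≤ lorenz μ x := by
  rw [lorenz_Ioo hμ hx]
  apply div_nonneg _ (le_of_lt hμ.2.2.2)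
  exact setIntegral_nonneg measurableSet_Ioo (fun t _ => quant_nonneg μ t)

lemma lorenz_le_one (hμ : MemM μ) {x : ℝ} (hx : 0 ≤ x) (hx1 : x ≤ 1) : lorenz μ x ≤ 1 := by
  have h := split_integral hμ hx hx1
  have h2 : 0 ≤ ∫ t in Set.Ioo x 1, quant μ t :=
    setIntegral_nonneg measurableSet_Ioo (fun t _ => quant_nonneg μ t)
  nlinarith [hμ.2.2.2]

lemma mtail_le (hμ : MemM μ) {x α : ℝ} (hx0 : 0 ≤ x) (hx1 : x < 1) (hα : 0 ≤ α) :
    mMean μ * (1 - lorenz μ x) ≤ α * (1 - x) + ∫ x in Set.Ioi α, x ∂μ := by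
  rw [← split_integral hμ hx0 hx1.le, tail_eq hμ hα]
  set c := cdfR μ α with hc
  have hc0 : 0 ≤ c := cdfR_nonneg μ α
  have hIx : IntegrableOn (quant μ) (Set.Ioo x 1) volume :=
    (integrableOn_quant hμ).mono_set (Set.Ioo_subset_Ioo_left hx0)
  have hIc : IntegrableOn (quant μ) (Set.Ioo c 1) volume :=
    (integrableOn_quant hμ).mono_set (Set.Ioo_subset_Ioo_left hc0)
  have hsplit : (∫ t in Set.Ioo x 1, quant μ t)
      = (∫ t in Set.Ioo x 1 ∩ Set.Iic c, quant μ t)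
        + ∫ t in Set.Ioo x 1 ∩ Set.Ioi c, quant μ t := by
    rw [← setIntegral_union]
    · congr 1
      rw [← Set.inter_union_distrib_left, Set.Iic_union_Ioi, Set.inter_univ]
    · exact Set.disjoint_left.mpr (fun t ht1 ht2 => (not_lt.mpr (Set.mem_Iic.mp ht1.2)) (Set.mem_Ioi.mp ht2.2))
    · exact measurableSet_Ioo.inter measurableSet_Ioi
    · exact hIx.mono_set Set.inter_subset_left
    · exact hIx.mono_set Set.inter_subset_left
  have hb1 : (∫ t in Set.Ioo x 1 ∩ Set.Iic c, quant μ t) ≤ α * (1 - x) := by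
    have hmeas : MeasurableSet (Set.Ioo x 1 ∩ Set.Iic c) := measurableSet_Ioo.inter measurableSet_Iic
    have hle : ∀ t ∈ Set.Ioo x 1 ∩ Set.Iic c, quant μ t ≤ α := fun t ht =>
      (quant_le_iff hμ ht.1.2 hα).mpr ht.2
    have h1 : (∫ t in Set.Ioo x 1 ∩ Set.Iic c, quant μ t)
        ≤ ∫ _ in Set.Ioo x 1 ∩ Set.Iic c, α := by
      apply setIntegral_mono_on (hIx.mono_set Set.inter_subset_left)
        ((integrableOn_const_iff (C := α)).mpr (Or.inr ?_)) hmeas hle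
      exact lt_of_le_of_lt (measure_mono Set.inter_subset_left) measure_Ioo_lt_top
    rw [setIntegral_const, smul_eq_mul, measureReal_def] at h1
    have h2 : (volume (Set.Ioo x 1 ∩ Set.Iic c)).toReal ≤ 1 - x := by
      have := measure_mono (μ := volume) (Set.inter_subset_left (s := Set.Ioo x 1) (t := Set.Iic c))
      rw [Real.volume_Ioo] at this
      calc (volume (Set.Ioo x 1 ∩ Set.Iic c)).toReal ≤ (ENNReal.ofReal (1-x)).toReal :=
        ENNReal.toReal_mono ofReal_ne_top this
      _ = 1 - x := ENNReal.toReal_ofReal (by linarith)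
    have h3 : (volume (Set.Ioo x 1 ∩ Set.Iic c)).toReal * α ≤ (1-x) * α :=
      mul_le_mul_of_nonneg_right h2 hα
    linarith [mul_comm α (1-x)]
  have hb2 : (∫ t in Set.Ioo x 1 ∩ Set.Ioi c, quant μ t) ≤ ∫ t in Set.Ioo c 1, quant μ t :=
    setIntegral_mono_set hIc (quant_nonneg_ae μ)
      (HasSubset.Subset.eventuallyLE (fun t ht => ⟨ht.2, ht.1.2⟩))
  linarith

end aux

/-- (1) If the means are uniformly bounded and the pointwise liminf
(along the cofinite filter) of the Lorenz functions tends to `1` as `x → 1⁻`, then the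
family is uniformly integrable. (2) If the family is uniformly integrable and the means
are bounded away from `0`, then the pointwise infimum of the Lorenz functions tends to
`1` as `x → 1⁻`. -/
theorem unifInt_iff_lorenz_near_one {ι : Type*} [Nonempty ι]
    (μs : ι → Measure ℝ) (h : ∀ i, MemM (μs i)) :
    ((∃ C : ℝ, ∀ i, mMean (μs i) ≤ C) →
      Tendsto (fun x => Filter.liminf (fun i => lorenz (μs i) x) Filter.cofinite)
        (𝓝[<] (1:ℝ)) (𝓝 1) →
      UnifInt μs) ∧
    (UnifInt μs → (∃ c : ℝ, 0 < c ∧ ∀ i, c ≤ mMean (μs i)) →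
      Tendsto (fun x => ⨅ i, lorenz (μs i) x) (𝓝[<] (1:ℝ)) (𝓝 1)) := by
  constructor
  · rintro ⟨C, hC⟩ htend ε hε
    obtain ⟨i₀⟩ := ‹Nonempty ι›
    have hC0 : 0 < C := lt_of_lt_of_le (h i₀).2.2.2 (hC i₀)
    set η := ε / C with hη
    have hη0 : 0 < η := div_pos hε hC0
    have hev : ∀ᶠ x in 𝓝[<] (1:ℝ),
        1 - η < Filter.liminf (fun i => lorenz (μs i) x) Filter.cofinite :=
      htend.eventually_const_lt (by linarith)
    have hIoo : Set.Ioo (0:ℝ) 1 ∈ 𝓝[<] (1:ℝ) :=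
      Ioo_mem_nhdsLT_of_mem ⟨by norm_num, le_refl 1⟩
    obtain ⟨x, hx1, hx2⟩ := (hev.and (eventually_of_mem hIoo (fun y hy => hy))).exists
    obtain ⟨hx0, hxlt1⟩ := hx2
    have hbdd : ∀ i, (0:ℝ) ≤ lorenz (μs i) x := fun i => lorenz_nonneg (h i) hx0.le
    have hfin : {i | ¬ (1 - η < lorenz (μs i) x)}.Finite := by
      have hb : Filter.IsBoundedUnder (· ≥ ·) Filter.cofinite (fun i => lorenz (μs i) x) :=
        Filter.isBoundedUnder_of ⟨0, fun i => hbdd i⟩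
      have := Filter.eventually_lt_of_lt_liminf hx1 hb
      rwa [Filter.eventually_cofinite] at this
    classical
    choose A hA using fun i => tail_small (h i) hε
    obtain ⟨A₁, hA₁⟩ := (hfin.image A).bddAbove
    set A₀ := max (C / (1 - x)) 1 with hA₀
    refine ⟨max A₀ A₁, fun α hα i => ?_⟩
    by_cases hi : 1 - η < lorenz (μs i) x
    · have hα1 : (1:ℝ) ≤ α := le_trans (le_trans (le_max_right _ _) (le_max_left A₀ A₁)) hα
      have hαpos : (0:ℝ) < α := by linarith
      have hcx : x ≤ cdfR (μs i) α := by
        have hm := markov (h i) hαpos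
        have hαA : C / (1 - x) ≤ α :=
          le_trans (le_trans (le_max_left _ _) (le_max_left A₀ A₁)) hα
        have h1x : (0:ℝ) < 1 - x := by linarith
        have hCα : C / α ≤ 1 - x := by
          rw [div_le_iff₀ hαpos]
          calc C = (1-x) * (C/(1-x)) := by field_simp
          _ ≤ (1-x) * α := mul_le_mul_of_nonneg_left hαA h1x.le
        have hmα : mMean (μs i) / α ≤ C / α := by gcongr; exact hC i
        linarith
      have := tail_le_of_cdfR_ge (h i) hx0.le hxlt1.le hαpos.le hcx
      have hL1 : lorenz (μs i) x ≤ 1 := lorenz_le_one (h i) hx0.le hxlt1.le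
      have hm0 : 0 < mMean (μs i) := (h i).2.2.2
      have hmC : mMean (μs i) ≤ C := hC i
      have : mMean (μs i) * (1 - lorenz (μs i) x) ≤ C * η := by
        nlinarith
      have hCη : C * η = ε := by
        rw [hη]; field_simp
      linarith [tail_le_of_cdfR_ge (h i) hx0.le hxlt1.le hαpos.le hcx]
    · have hiS : i ∈ {i | ¬ (1 - η < lorenz (μs i) x)} := hi
      have : A i ≤ A₁ := hA₁ (Set.mem_image_of_mem A hiS)
      exact hA i α (le_trans this (le_trans (le_max_right A₀ A₁) hα))
  · rintro hui ⟨c, hc0, hc⟩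
    rw [Metric.tendsto_nhds]
    intro ε hε
    set e := min (ε/2) (1/2) with he
    have he0 : 0 < e := lt_min (by linarith) (by norm_num)
    have heε : e < ε := lt_of_le_of_lt (min_le_left _ _) (by linarith)
    obtain ⟨A, hA⟩ := hui (e * c / 2) (by positivity)
    set α := max A 1 with hα
    have hαpos : (0:ℝ) < α := lt_of_lt_of_le one_pos (le_max_right A 1)
    set δ := (e * c / 2) / α with hδ
    have hδ0 : 0 < δ := by positivity
    have hmem : Set.Ioo (max (1-δ) 0) 1 ∈ 𝓝[<] (1:ℝ) :=
      Ioo_mem_nhdsLT_of_mem ⟨lt_of_le_of_lt (le_refl _) (by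
        apply max_lt <;> linarith), le_refl 1⟩
    filter_upwards [hmem] with x hx
    have hx0 : 0 < x := lt_of_le_of_lt (le_max_right _ _) hx.1
    have hx1 : x < 1 := hx.2
    have hxδ : 1 - x < δ := by
      have := lt_of_le_of_lt (le_max_left (1-δ) 0) hx.1
      linarith
    have key : ∀ i, 1 - e ≤ lorenz (μs i) x := by
      intro i
      have hm0 : 0 < mMean (μs i) := (h i).2.2.2
      have hmc : c ≤ mMean (μs i) := hc i
      have h1 := mtail_le (h i) hx0.le hx1 hαpos.le
      have h2 : (∫ y in Set.Ioi α, y ∂(μs i)) ≤ e * c / 2 := hA α (le_max_left A 1) i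
      have h3 : α * (1 - x) ≤ e * c / 2 := by
        have : α * (1 - x) ≤ α * δ := by
          apply mul_le_mul_of_nonneg_left hxδ.le hαpos.le
        rw [hδ] at this
        calc α * (1-x) ≤ α * ((e*c/2)/α) := this
        _ = e * c / 2 := by rw [mul_comm, div_mul_cancel₀ _ (ne_of_gt hαpos)]
      have h4 : mMean (μs i) * (1 - lorenz (μs i) x) ≤ e * c := by linarith
      nlinarith
    have hub : ∀ i, lorenz (μs i) x ≤ 1 := fun i => lorenz_le_one (h i) hx0.le hx1.le
    have hbdd : BddBelow (Set.range (fun i => lorenz (μs i) x)) :=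
      ⟨1 - e, by rintro y ⟨i, rfl⟩; exact key i⟩
    obtain ⟨i₀⟩ := ‹Nonempty ι›
    have h5 : 1 - e ≤ ⨅ i, lorenz (μs i) x := le_ciInf key
    have h6 : (⨅ i, lorenz (μs i) x) ≤ 1 := le_trans (ciInf_le hbdd i₀) (hub i₀)
    rw [Real.dist_eq, abs_lt]
    constructor <;> linarith
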